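/- arXiv:1507.00782 — 5 statements merged into one kernel-verified Lean document; each statement's English description precedes it below -/
import Mathlib

section
/- If c : X × X → ℝ is symmetric and the energy functional K(Q) = ∫∫ c(x,y) dQ(x) dQ(y) is convex on the set of Borel probability measures P(X), then c is balanced positive definite: for all distinct points x₁,…,xₙ ∈ X and reals a₁,…,aₙ with ∑ᵢ aᵢ = 0, we have ∑ᵢⱼ c(xᵢ,xⱼ) aᵢ aⱼ ≥ 0. -/
open MeasureTheory ENNReal

section aux

variable {X : Type*} [MeasurableSpace X] [MeasurableSingletonClass X]

lemma my_integrable_dirac (f : X → ℝ) (a : X) : Integrable f (Measure.dirac a) := by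
  have h : f =ᵐ[Measure.dirac a] fun _ => f a := by
    rw [ae_dirac_eq]; exact Filter.eventually_pure.2 rfl
  exact (integrable_const (f a)).congr h.symm

lemma my_integral_discrete {n : ℕ} (x : Fin n → X) (w : Fin n → ℝ) (hw : ∀ i, 0 ≤ w i)
    (f : X → ℝ) :
    ∫ y, f y ∂(∑ i, ENNReal.ofReal (w i) • Measure.dirac (x i)) = ∑ i, w i * f (x i) := by
  rw [integral_finset_sum_measure]
  · refine Finset.sum_congr rfl fun i _ => ?_
    rw [integral_smul_measure, integral_dirac, ENNReal.toReal_ofReal (hw i), smul_eq_mul]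
  · intro i _
    exact (my_integrable_dirac f (x i)).smul_measure ofReal_ne_top

lemma my_integrable_discrete {n : ℕ} (x : Fin n → X) (w : Fin n → ℝ) (f : X → ℝ) :
    Integrable f (∑ i, ENNReal.ofReal (w i) • Measure.dirac (x i)) := by
  refine integrable_finset_sum_measure.2 fun i _ => ?_
  exact (my_integrable_dirac f (x i)).smul_measure ofReal_ne_top

end aux

/-- If the energy functional `K` is convex on Borel probability measures, then `c` is
balanced positive definite. -/
theorem stmt_1 {X : Type*} [TopologicalSpace X] [PolishSpace X]
    [MeasurableSpace X] [BorelSpace X]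
    (c : X → X → ℝ)
    (hc_cont : Continuous fun p : X × X => c p.1 p.2)
    (hc_bdd : ∃ M : ℝ, ∀ x y, |c x y| ≤ M)
    (hc_symm : ∀ x y, c x y = c y x)
    (hc_nonneg : ∀ x y, 0 ≤ c x y)
    (K : Measure X → ℝ)
    (hK : ∀ Q : Measure X, K Q = ∫ x, ∫ y, c x y ∂Q ∂Q)
    (hconv : ∀ (Q Q' : Measure X), IsProbabilityMeasure Q → IsProbabilityMeasure Q' →
      ∀ t : ℝ, 0 ≤ t → t ≤ 1 →
        K (ENNReal.ofReal t • Q + ENNReal.ofReal (1 - t) • Q')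
          ≤ t * K Q + (1 - t) * K Q') :
    ∀ (n : ℕ) (x : Fin n → X), Function.Injective x →
      ∀ a : Fin n → ℝ, ∑ i, a i = 0 →
        0 ≤ ∑ i, ∑ j, c (x i) (x j) * a i * a j := by
  letI := TopologicalSpace.upgradeIsCompletelyMetrizable X
  intro n x hinj a hsum
  -- decompose a into positive and negative parts
  set wp : Fin n → ℝ := fun i => max (a i) 0 with hwp
  set wm : Fin n → ℝ := fun i => max (-(a i)) 0 with hwm
  have hwp0 : ∀ i, 0 ≤ wp i := fun i => le_max_right _ _
  have hwm0 : ∀ i, 0 ≤ wm i := fun i => le_max_right _ _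
  have hdiff : ∀ i, wp i - wm i = a i := fun i => by
    simp only [hwp, hwm]; rcases le_total (a i) 0 with h | h <;>
      [simp [max_eq_right h, max_eq_left (neg_nonneg.2 h)];
       simp [max_eq_left h, max_eq_right (neg_nonpos.2 h)]]
  set s : ℝ := ∑ i, wp i with hs
  have hs0 : 0 ≤ s := Finset.sum_nonneg fun i _ => hwp0 i
  have hsumeq : ∑ i, wm i = s := by
    have h1 : ∑ i, (wp i - wm i) = ∑ i, a i := Finset.sum_congr rfl fun i _ => by rw [hdiff i]
    rw [Finset.sum_sub_distrib, hsum] at h1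
    rw [hs]; linarith
  rcases eq_or_lt_of_le hs0 with hseq | hspos
  · -- s = 0 : all a i = 0
    have hz : ∀ i, a i = 0 := by
      intro i
      have h1 : wp i = 0 :=
        le_antisymm (by
          have := Finset.single_le_sum (f := wp) (fun j _ => hwp0 j) (Finset.mem_univ i)
          linarith) (hwp0 i)
      have h2 : wm i = 0 :=
        le_antisymm (by
          have := Finset.single_le_sum (f := wm) (fun j _ => hwm0 j) (Finset.mem_univ i)
          rw [hsumeq] at this
          linarith) (hwm0 i)
      have := hdiff i
      linarith
    simp [hz]
  · -- s > 0
    set p : Fin n → ℝ := fun i => wp i / s with hp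
    set q : Fin n → ℝ := fun i => wm i / s with hq
    have hp0 : ∀ i, 0 ≤ p i := fun i => div_nonneg (hwp0 i) hs0
    have hq0 : ∀ i, 0 ≤ q i := fun i => div_nonneg (hwm0 i) hs0
    have hpsum : ∑ i, p i = 1 := by
      rw [hp]; rw [← Finset.sum_div]; field_simp; exact hs.symm
    have hqsum : ∑ i, q i = 1 := by
      rw [hq]; rw [← Finset.sum_div, hsumeq]; field_simp
    set μ : (Fin n → ℝ) → Measure X := fun w => ∑ i, ENNReal.ofReal (w i) • Measure.dirac (x i)
      with hμ
    have hprob : ∀ w : Fin n → ℝ, (∀ i, 0 ≤ w i) → (∑ i, w i = 1) →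
        IsProbabilityMeasure (μ w) := by
      intro w hw hws
      constructor
      rw [hμ]
      simp only [Measure.coe_finset_sum, Finset.sum_apply, Measure.smul_apply,
        Measure.dirac_apply_of_mem (Set.mem_univ _), smul_eq_mul, mul_one]
      rw [← ENNReal.ofReal_sum_of_nonneg (fun i _ => hw i), hws, ENNReal.ofReal_one]
    -- continuity facts
    have hc_cont1 : ∀ y : X, Continuous fun z => c y z := fun y =>
      hc_cont.comp (Continuous.prodMk_right y)
    -- compute K on discrete measures
    have hKval : ∀ w : Fin n → ℝ, (∀ i, 0 ≤ w i) →
        K (μ w) = ∑ i, ∑ j, w i * (w j * c (x i) (x j)) := by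
      intro w hw
      rw [hK, hμ]
      rw [my_integral_discrete x w hw]
      refine Finset.sum_congr rfl fun i _ => ?_
      rw [my_integral_discrete x w hw (fun z => c (x i) z), Finset.mul_sum]
    -- mixture measure
    set u : Fin n → ℝ := fun i => (p i + q i) / 2 with hu
    have hu0 : ∀ i, 0 ≤ u i := fun i => by
      have := hp0 i; have := hq0 i; rw [hu]; positivity
    have hmix : ENNReal.ofReal (1/2 : ℝ) • μ p + ENNReal.ofReal (1 - 1/2 : ℝ) • μ q = μ u := by
      rw [hμ]
      rw [Finset.smul_sum, Finset.smul_sum, ← Finset.sum_add_distrib]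
      refine Finset.sum_congr rfl fun i _ => ?_
      rw [smul_smul, smul_smul, ← add_smul]
      congr 1
      rw [← ENNReal.ofReal_mul (by norm_num), ← ENNReal.ofReal_mul (by norm_num),
        ← ENNReal.ofReal_add (by positivity) (by positivity)]
      congr 1
      rw [hu]; ring
    have hkey := hconv (μ p) (μ q) (hprob p hp0 hpsum) (hprob q hq0 hqsum)
      (1/2) (by norm_num) (by norm_num)
    rw [hmix, hKval p hp0, hKval q hq0, hKval u hu0] at hkey
    -- expand the u-double-sum
    set A := ∑ i, ∑ j, p i * (p j * c (x i) (x j)) with hA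
    set B := ∑ i, ∑ j, p i * (q j * c (x i) (x j)) with hB
    set C := ∑ i, ∑ j, q i * (p j * c (x i) (x j)) with hC
    set D := ∑ i, ∑ j, q i * (q j * c (x i) (x j)) with hD
    have hexpand : ∑ i, ∑ j, u i * (u j * c (x i) (x j)) = (1/4) * (A + B + C + D) := by
      rw [hA, hB, hC, hD]
      have : ∀ i j : Fin n, u i * (u j * c (x i) (x j)) =
          (1/4) * (p i * (p j * c (x i) (x j)) + p i * (q j * c (x i) (x j))
            + q i * (p j * c (x i) (x j)) + q i * (q j * c (x i) (x j))) := by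
        intro i j; simp only [hu]; ring
      simp only [this, ← Finset.mul_sum, Finset.sum_add_distrib]
    rw [hexpand] at hkey
    have hnn : 0 ≤ A - B - C + D := by linarith
    have hgoal : ∑ i, ∑ j, c (x i) (x j) * a i * a j = s^2 * (A - B - C + D) := by
      rw [hA, hB, hC, hD]
      have hai : ∀ i, a i = s * p i - s * q i := by
        intro i
        rw [hp, hq]
        field_simp
        linarith [hdiff i]
      have : ∀ i j : Fin n, c (x i) (x j) * a i * a j =
          s^2 * (p i * (p j * c (x i) (x j)) - p i * (q j * c (x i) (x j))
            - q i * (p j * c (x i) (x j)) + q i * (q j * c (x i) (x j))) := by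
        intro i j; rw [hai i, hai j]; ring
      simp only [this, ← Finset.mul_sum, Finset.sum_add_distrib, Finset.sum_sub_distrib]
    rw [hgoal]
    exact mul_nonneg (sq_nonneg s) hnn
end

section
/- If c : X × X → ℝ is continuous, bounded, symmetric, and balanced positive definite, then the energy functional K(Q) = ∫∫ c(x,y) dQ(x) dQ(y) is convex on the set of Borel probability measures on X. -/
open MeasureTheory ENNReal Filter Topology

lemma integrable_of_bdd {α : Type*} [MeasurableSpace α] {m : Measure α} [IsFiniteMeasure m]
    {f : α → ℝ} (hf : AEStronglyMeasurable f m) {M : ℝ} (h : ∀ x, |f x| ≤ M) :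
    Integrable f m :=
  (integrable_const M).mono' hf (ae_of_all _ (by simpa [Real.norm_eq_abs] using h))

lemma key_pd {X : Type*} [MetricSpace X] [TopologicalSpace.SeparableSpace X] [Nonempty X]
    [MeasurableSpace X] [BorelSpace X]
    (c : X → X → ℝ)
    (hc_cont : Continuous fun p : X × X => c p.1 p.2)
    {M : ℝ} (hM : ∀ x y, |c x y| ≤ M)
    (hpd : ∀ (n : ℕ) (x : Fin n → X) (a : Fin n → ℝ), ∑ i, a i = 0 →
      0 ≤ ∑ i, ∑ j, c (x i) (x j) * a i * a j)
    (Q Q' : Measure X) [IsProbabilityMeasure Q] [IsProbabilityMeasure Q'] :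
    (∫ p : X × X, c p.1 p.2 ∂(Q.prod Q')) + (∫ p : X × X, c p.1 p.2 ∂(Q'.prod Q))
      ≤ (∫ p : X × X, c p.1 p.2 ∂(Q.prod Q)) + ∫ p : X × X, c p.1 p.2 ∂(Q'.prod Q') := by
  classical
  haveI : SecondCountableTopology X := UniformSpace.secondCountable_of_separable X
  obtain ⟨d, hd⟩ := TopologicalSpace.exists_dense_seq X
  set P : ℕ → ℕ → X → Prop := fun n i x => i ≤ n ∧ ∀ j ≤ n, dist x (d i) ≤ dist x (d j) with hP
  have hex : ∀ n x, ∃ i, P n i x := by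
    intro n x
    obtain ⟨i, hi, hmin⟩ := Finset.exists_min_image (Finset.range (n+1))
      (fun i => dist x (d i)) ⟨0, by simp⟩
    exact ⟨i, Nat.lt_succ_iff.mp (Finset.mem_range.mp hi),
      fun j hj => hmin j (Finset.mem_range.mpr (Nat.lt_succ_iff.mpr hj))⟩
  set idx : ℕ → X → ℕ := fun n x => Nat.find (hex n x) with hidx
  set T : ℕ → X → X := fun n x => d (idx n x) with hT
  have hPmeas : ∀ n i, MeasurableSet {x | P n i x} := by
    intro n i
    have : {x | P n i x} = {x | i ≤ n} ∩ ⋂ j ∈ {j | j ≤ n}, {x | dist x (d i) ≤ dist x (d j)} := by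
      ext x; simp [hP]
    rw [this]
    refine MeasurableSet.inter ?_ (MeasurableSet.biInter (Set.to_countable _) fun j _ => ?_)
    · by_cases h : i ≤ n <;> simp [h]
    · exact (isClosed_le (continuous_id.dist continuous_const)
        (continuous_id.dist continuous_const)).measurableSet
  have hidx_meas : ∀ n, Measurable (idx n) := fun n =>
    Measurable.find (f := fun i (_ : X) => i) (fun _ => measurable_const)
      (fun i => hPmeas n i) (hex n)
  have hT_meas : ∀ n, Measurable (T n) := fun n =>
    (measurable_from_top (f := d)).comp (hidx_meas n)
  have hidx_le : ∀ n x, idx n x ≤ n := fun n x => (Nat.find_spec (hex n x)).1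
  have hT_tendsto : ∀ x, Tendsto (fun n => T n x) atTop (𝓝 x) := by
    intro x
    rw [Metric.tendsto_atTop]
    intro ε hε
    obtain ⟨k, hk⟩ := Metric.denseRange_iff.mp hd x ε hε
    refine ⟨k, fun n hn => ?_⟩
    have h1 : dist x (T n x) ≤ dist x (d k) := (Nat.find_spec (hex n x)).2 k hn
    rw [dist_comm]; exact lt_of_le_of_lt h1 hk
  -- the discretized integral equals a finite double sum
  have hmeasNN : ∀ f : ℕ × ℕ → ℝ, Measurable f := fun f => measurable_of_countable f
  have hSsum : ∀ (μ ν : Measure X), IsProbabilityMeasure μ → IsProbabilityMeasure ν → ∀ n,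
      ∫ p : X × X, c (T n p.1) (T n p.2) ∂(μ.prod ν)
        = ∑ i ∈ Finset.range (n+1), ∑ j ∈ Finset.range (n+1),
            (μ.map (idx n) {i}).toReal * (ν.map (idx n) {j}).toReal * c (d i) (d j) := by
    intro μ ν hμ hν n
    haveI := hμ; haveI := hν
    haveI : IsProbabilityMeasure (μ.map (idx n)) :=
      Measure.isProbabilityMeasure_map (hidx_meas n).aemeasurable
    haveI : IsProbabilityMeasure (ν.map (idx n)) :=
      Measure.isProbabilityMeasure_map (hidx_meas n).aemeasurable
    have h1 : ∫ p : X × X, c (T n p.1) (T n p.2) ∂(μ.prod ν)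
        = ∫ q : ℕ × ℕ, c (d q.1) (d q.2) ∂((μ.map (idx n)).prod (ν.map (idx n))) := by
      rw [Measure.map_prod_map _ _ (hidx_meas n) (hidx_meas n)]
      rw [integral_map (φ := Prod.map (idx n) (idx n))
        ((hidx_meas n).prodMap (hidx_meas n)).aemeasurable
        (hmeasNN _).aestronglyMeasurable]
      rfl
    have hint : Integrable (fun q : ℕ × ℕ => c (d q.1) (d q.2))
        ((μ.map (idx n)).prod (ν.map (idx n))) :=
      integrable_of_bdd (hmeasNN _).aestronglyMeasurable (fun q => hM _ _)
    rw [h1, integral_countable' hint]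
    rw [tsum_eq_sum (s := Finset.range (n+1) ×ˢ Finset.range (n+1)) ?vanish]
    · rw [Finset.sum_product]
      refine Finset.sum_congr rfl fun i _ => Finset.sum_congr rfl fun j _ => ?_
      have : ({(i, j)} : Set (ℕ × ℕ)) = {i} ×ˢ {j} := by
        simp [Set.singleton_prod_singleton]
      rw [this, measureReal_def, Measure.prod_prod, ENNReal.toReal_mul, smul_eq_mul]
    case vanish =>
      intro q hq
      have hq2 : ({q} : Set (ℕ × ℕ)) = {q.1} ×ˢ {q.2} := by simp
      rw [hq2, measureReal_def, Measure.prod_prod]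
      have hor : n < q.1 ∨ n < q.2 := by
        by_contra h
        push_neg at h
        exact hq (Finset.mem_product.mpr ⟨Finset.mem_range.mpr (Nat.lt_succ_iff.mpr h.1),
          Finset.mem_range.mpr (Nat.lt_succ_iff.mpr h.2)⟩)
      have hempty : ∀ m, n < m → idx n ⁻¹' {m} = ∅ := by
        intro m hm
        ext x; simp only [Set.mem_preimage, Set.mem_singleton_iff, Set.mem_empty_iff_false,
          iff_false]
        intro hx; exact absurd (hx ▸ hidx_le n x) (not_le.mpr hm)
      rcases hor with h | h
      · have : μ.map (idx n) {q.1} = 0 := by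
          rw [Measure.map_apply (hidx_meas n) (measurableSet_singleton _), hempty _ h]; simp
        simp [this]
      · have : ν.map (idx n) {q.2} = 0 := by
          rw [Measure.map_apply (hidx_meas n) (measurableSet_singleton _), hempty _ h]; simp
        simp [this]
  -- rows sum to 1
  have hrow : ∀ (μ : Measure X), IsProbabilityMeasure μ → ∀ n,
      ∑ i ∈ Finset.range (n+1), (μ.map (idx n) {i}).toReal = 1 := by
    intro μ hμ n
    haveI := hμ
    have h1 : ∑ i ∈ Finset.range (n+1), (μ.map (idx n)) {i}
        = (μ.map (idx n)) (↑(Finset.range (n+1)) : Set ℕ) := by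
      rw [← measure_biUnion_finset ?_ (fun i _ => measurableSet_singleton i)]
      · congr 1; ext i; simp
      · intro i _ j _ hij
        simp [Function.onFun, Set.disjoint_singleton, hij]
    have h2 : (μ.map (idx n)) (↑(Finset.range (n+1)) : Set ℕ) = 1 := by
      rw [Measure.map_apply (hidx_meas n) (by measurability)]
      have : idx n ⁻¹' ↑(Finset.range (n+1)) = Set.univ := by
        ext x; simp [Nat.lt_succ_iff, hidx_le n x]
      rw [this]; exact measure_univ
    rw [← ENNReal.toReal_sum (fun i _ => measure_ne_top _ _), h1, h2, ENNReal.toReal_one]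
  -- the per-n inequality via hpd
  have hstep : ∀ n,
      (∫ p : X × X, c (T n p.1) (T n p.2) ∂(Q.prod Q'))
        + (∫ p : X × X, c (T n p.1) (T n p.2) ∂(Q'.prod Q))
      ≤ (∫ p : X × X, c (T n p.1) (T n p.2) ∂(Q.prod Q))
        + ∫ p : X × X, c (T n p.1) (T n p.2) ∂(Q'.prod Q') := by
    intro n
    set q : ℕ → ℝ := fun i => (Q.map (idx n) {i}).toReal with hq
    set q' : ℕ → ℝ := fun i => (Q'.map (idx n) {i}).toReal with hq'
    have ha : ∑ i : Fin (n+1), (q i - q' i) = 0 := by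
      rw [Finset.sum_sub_distrib,
        Fin.sum_univ_eq_sum_range q, Fin.sum_univ_eq_sum_range q',
        hrow Q inferInstance n, hrow Q' inferInstance n, sub_self]
    have h0 := hpd (n+1) (fun i => d i) (fun i => q i - q' i) ha
    have inner : ∑ i : Fin (n+1), ∑ j : Fin (n+1), c (d i) (d j) * (q i - q' i) * (q j - q' j)
        = ∑ i ∈ Finset.range (n+1), ∑ j ∈ Finset.range (n+1),
            c (d i) (d j) * (q i - q' i) * (q j - q' j) := by
      rw [Fin.sum_univ_eq_sum_range
        (fun i => ∑ j : Fin (n+1), c (d i) (d j) * (q i - q' i) * (q j - q' j))]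
      exact Finset.sum_congr rfl fun i _ =>
        Fin.sum_univ_eq_sum_range (fun j => c (d i) (d j) * (q i - q' i) * (q j - q' j)) _
    rw [inner] at h0
    have e : ∑ i ∈ Finset.range (n+1), ∑ j ∈ Finset.range (n+1),
          c (d i) (d j) * (q i - q' i) * (q j - q' j)
        = ((∑ i ∈ Finset.range (n+1), ∑ j ∈ Finset.range (n+1), q i * q j * c (d i) (d j))
        + (∑ i ∈ Finset.range (n+1), ∑ j ∈ Finset.range (n+1), q' i * q' j * c (d i) (d j)))
        - ((∑ i ∈ Finset.range (n+1), ∑ j ∈ Finset.range (n+1), q i * q' j * c (d i) (d j))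
        + (∑ i ∈ Finset.range (n+1), ∑ j ∈ Finset.range (n+1), q' i * q j * c (d i) (d j))) := by
      rw [← Finset.sum_add_distrib, ← Finset.sum_add_distrib, ← Finset.sum_sub_distrib]
      refine Finset.sum_congr rfl fun i _ => ?_
      rw [← Finset.sum_add_distrib, ← Finset.sum_add_distrib, ← Finset.sum_sub_distrib]
      refine Finset.sum_congr rfl fun j _ => ?_
      ring
    rw [e] at h0
    rw [hSsum Q Q' inferInstance inferInstance n, hSsum Q' Q inferInstance inferInstance n,
      hSsum Q Q inferInstance inferInstance n, hSsum Q' Q' inferInstance inferInstance n]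
    linarith
  -- pass to the limit
  have htend : ∀ (μ ν : Measure X), IsProbabilityMeasure μ → IsProbabilityMeasure ν →
      Tendsto (fun n => ∫ p : X × X, c (T n p.1) (T n p.2) ∂(μ.prod ν)) atTop
        (𝓝 (∫ p : X × X, c p.1 p.2 ∂(μ.prod ν))) := by
    intro μ ν hμ hν
    haveI := hμ; haveI := hν
    refine tendsto_integral_of_dominated_convergence (fun _ => M) ?_ (integrable_const M) ?_ ?_
    · intro n
      exact (hc_cont.measurable.comp (((hT_meas n).comp measurable_fst).prodMk
        ((hT_meas n).comp measurable_snd))).aestronglyMeasurable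
    · intro n
      exact ae_of_all _ fun p => by simpa [Real.norm_eq_abs] using hM (T n p.1) (T n p.2)
    · refine ae_of_all _ fun p => ?_
      have : Tendsto (fun n => (T n p.1, T n p.2)) atTop (𝓝 (p.1, p.2)) :=
        (hT_tendsto p.1).prodMk_nhds (hT_tendsto p.2)
      exact (hc_cont.tendsto (p.1, p.2)).comp this
  refine le_of_tendsto_of_tendsto'
    ((htend Q Q' inferInstance inferInstance).add (htend Q' Q inferInstance inferInstance))
    ((htend Q Q inferInstance inferInstance).add (htend Q' Q' inferInstance inferInstance))
    hstep

/-- If `c` is continuous bounded symmetric and balanced positive definite, then the energy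
functional `K` is convex on Borel probability measures. -/
theorem stmt_3 {X : Type*} [TopologicalSpace X] [PolishSpace X]
    [MeasurableSpace X] [BorelSpace X]
    (c : X → X → ℝ)
    (hc_cont : Continuous fun p : X × X => c p.1 p.2)
    (hc_bdd : ∃ M : ℝ, ∀ x y, |c x y| ≤ M)
    (hc_symm : ∀ x y, c x y = c y x)
    (hc_nonneg : ∀ x y, 0 ≤ c x y)
    (hpd : ∀ (n : ℕ) (x : Fin n → X) (a : Fin n → ℝ), ∑ i, a i = 0 →
      0 ≤ ∑ i, ∑ j, c (x i) (x j) * a i * a j)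
    (K : Measure X → ℝ)
    (hK : ∀ Q : Measure X, K Q = ∫ x, ∫ y, c x y ∂Q ∂Q) :
    ∀ (Q Q' : Measure X), IsProbabilityMeasure Q → IsProbabilityMeasure Q' →
      ∀ t : ℝ, 0 ≤ t → t ≤ 1 →
        K (ENNReal.ofReal t • Q + ENNReal.ofReal (1 - t) • Q')
          ≤ t * K Q + (1 - t) * K Q' := by
  intro Q Q' hQ hQ' t ht ht1
  haveI := hQ; haveI := hQ'
  cases isEmpty_or_nonempty X with
  | inl h =>
    exfalso
    have := hQ.measure_univ
    rw [Set.univ_eq_empty_iff.mpr h] at this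
    simp at this
  | inr h =>
    letI := TopologicalSpace.upgradeIsCompletelyMetrizable X
    obtain ⟨M, hM⟩ := hc_bdd
    set mix : Measure X := ENNReal.ofReal t • Q + ENNReal.ofReal (1 - t) • Q' with hmix
    haveI hmixprob : IsProbabilityMeasure mix := by
      constructor
      simp only [hmix, Measure.add_toOuterMeasure, Measure.coe_add, Pi.add_apply,
        Measure.smul_apply, measure_univ, smul_eq_mul, mul_one]
      rw [← ENNReal.ofReal_add ht (by linarith)]
      norm_num
    -- basic integrability facts
    have hcm : StronglyMeasurable fun p : X × X => c p.1 p.2 := hc_cont.stronglyMeasurable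
    have hintc : ∀ (μ ν : Measure X), IsProbabilityMeasure μ → IsProbabilityMeasure ν →
        Integrable (fun p : X × X => c p.1 p.2) (μ.prod ν) := by
      intro μ ν hμ hν; haveI := hμ; haveI := hν
      exact integrable_of_bdd hcm.aestronglyMeasurable (fun p => hM p.1 p.2)
    have hintx : ∀ x (μ : Measure X), IsProbabilityMeasure μ → Integrable (fun y => c x y) μ := by
      intro x μ hμ; haveI := hμ
      exact integrable_of_bdd (hc_cont.comp (Continuous.prodMk_right x)).aestronglyMeasurable
        (fun y => hM x y)
    -- iterated = product integral
    have hIJ : ∀ (μ ν : Measure X), IsProbabilityMeasure μ → IsProbabilityMeasure ν →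
        ∫ x, ∫ y, c x y ∂ν ∂μ = ∫ p : X × X, c p.1 p.2 ∂(μ.prod ν) := by
      intro μ ν hμ hν; haveI := hμ; haveI := hν
      exact (integral_prod _ (hintc μ ν hμ hν)).symm
    -- splitting integrals over mix
    have hsplit : ∀ f : X → ℝ, Integrable f Q → Integrable f Q' →
        ∫ x, f x ∂mix = t * ∫ x, f x ∂Q + (1 - t) * ∫ x, f x ∂Q' := by
      intro f hfQ hfQ'
      rw [hmix, integral_add_measure (hfQ.smul_measure ofReal_ne_top)
        (hfQ'.smul_measure ofReal_ne_top), integral_smul_measure, integral_smul_measure,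
        ENNReal.toReal_ofReal ht, ENNReal.toReal_ofReal (by linarith), smul_eq_mul, smul_eq_mul]
    -- the inner integrals
    set g : X → ℝ := fun x => ∫ y, c x y ∂Q with hg
    set g' : X → ℝ := fun x => ∫ y, c x y ∂Q' with hg'
    have hM0 : 0 ≤ M := le_trans (abs_nonneg _) (hM h.some h.some)
    have hgb : ∀ (μ : Measure X), IsProbabilityMeasure μ → ∀ x, |∫ y, c x y ∂μ| ≤ M := by
      intro μ hμ x; haveI := hμ
      have := norm_integral_le_of_norm_le_const (μ := μ) (f := fun y => c x y) (C := M)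
        (ae_of_all _ fun y => by simpa [Real.norm_eq_abs] using hM x y)
      simpa [Real.norm_eq_abs, measure_univ] using this
    have hgmeas : StronglyMeasurable g := hcm.integral_prod_right'
    have hgmeas' : StronglyMeasurable g' := hcm.integral_prod_right'
    have hgint : ∀ (μ : Measure X), IsProbabilityMeasure μ → Integrable g μ := by
      intro μ hμ; haveI := hμ
      exact integrable_of_bdd hgmeas.aestronglyMeasurable (hgb Q hQ)
    have hgint' : ∀ (μ : Measure X), IsProbabilityMeasure μ → Integrable g' μ := by
      intro μ hμ; haveI := hμ
      exact integrable_of_bdd hgmeas'.aestronglyMeasurable (hgb Q' hQ')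
    have hinner : ∀ x, ∫ y, c x y ∂mix = t * g x + (1 - t) * g' x := fun x =>
      hsplit (fun y => c x y) (hintx x Q hQ) (hintx x Q' hQ')
    -- expand K mix
    have hKmix : K mix = t * (t * ∫ x, g x ∂Q + (1 - t) * ∫ x, g x ∂Q')
        + (1 - t) * (t * ∫ x, g' x ∂Q + (1 - t) * ∫ x, g' x ∂Q') := by
      rw [hK mix]
      have e1 : ∫ x, ∫ y, c x y ∂mix ∂mix = ∫ x, (t * g x + (1 - t) * g' x) ∂mix :=
        integral_congr_ae (ae_of_all _ fun x => hinner x)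
      rw [e1, integral_add ((hgint mix hmixprob).const_mul t)
        ((hgint' mix hmixprob).const_mul (1 - t)), integral_const_mul, integral_const_mul,
        hsplit g (hgint Q hQ) (hgint Q' hQ'), hsplit g' (hgint' Q hQ) (hgint' Q' hQ')]
    -- identify the four iterated integrals with product integrals
    set JQQ := ∫ p : X × X, c p.1 p.2 ∂(Q.prod Q) with hJQQ
    set JQQ' := ∫ p : X × X, c p.1 p.2 ∂(Q.prod Q') with hJQQ'
    set JQ'Q := ∫ p : X × X, c p.1 p.2 ∂(Q'.prod Q) with hJQ'Q
    set JQ'Q' := ∫ p : X × X, c p.1 p.2 ∂(Q'.prod Q') with hJQ'Q'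
    have egQ : ∫ x, g x ∂Q = JQQ := hIJ Q Q hQ hQ
    have egQ' : ∫ x, g x ∂Q' = JQ'Q := hIJ Q' Q hQ' hQ
    have eg'Q : ∫ x, g' x ∂Q = JQQ' := hIJ Q Q' hQ hQ'
    have eg'Q' : ∫ x, g' x ∂Q' = JQ'Q' := hIJ Q' Q' hQ' hQ'
    have hKQ : K Q = JQQ := by rw [hK Q]; exact hIJ Q Q hQ hQ
    have hKQ' : K Q' = JQ'Q' := by rw [hK Q']; exact hIJ Q' Q' hQ' hQ'
    -- key positive-definiteness inequality
    have hkey : JQQ' + JQ'Q ≤ JQQ + JQ'Q' :=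
      key_pd c hc_cont hM hpd Q Q'
    rw [hKmix, hKQ, hKQ', egQ, egQ', eg'Q, eg'Q']
    nlinarith [mul_nonneg (mul_nonneg ht (by linarith : (0:ℝ) ≤ 1 - t))
      (by linarith : (0:ℝ) ≤ JQQ + JQ'Q' - JQQ' - JQ'Q)]
end

section
/- For a bounded continuous symmetric kernel c on a Polish space X, the signed-measure energy of a difference of probability measures satisfies: if ∑ᵢⱼ c(xᵢ,xⱼ)aᵢaⱼ ≥ 0 for all balanced real coefficients (∑aᵢ = 0) and points xᵢ, then for all Borel probability measures Q, Q', ∫∫ c d(Q−Q') d(Q−Q') ≥ 0. -/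
open MeasureTheory ENNReal

section aux
variable {X : Type*} [MeasurableSpace X]

lemma aux_pi_map_eval {ι : Type*} [Fintype ι] (μ : ι → Measure X)
    [∀ i, IsProbabilityMeasure (μ i)] (i : ι) :
    (Measure.pi μ).map (fun ω => ω i) = μ i := by
  classical
  ext s hs
  rw [Measure.map_apply (measurable_pi_apply i) hs]
  have hpre : (fun ω : ι → X => ω i) ⁻¹' s
      = Set.pi Set.univ (fun k => if k = i then s else Set.univ) := by
    ext ω
    simp only [Set.mem_preimage, Set.mem_pi, Set.mem_univ, true_implies]
    constructor
    · intro h k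
      split_ifs with hk
      · subst hk; exact h
      · trivial
    · intro h
      have := h i
      simpa using this
  rw [hpre, Measure.pi_pi]
  have hval : ∀ k : ι, μ k (if k = i then s else Set.univ) = if k = i then μ i s else 1 := by
    intro k
    split_ifs with hk
    · subst hk; rfl
    · simp
  simp_rw [hval]
  simp

lemma aux_pi_map_pair {ι : Type*} [Fintype ι] (μ : ι → Measure X)
    [∀ i, IsProbabilityMeasure (μ i)] {i j : ι} (hij : i ≠ j) :
    (Measure.pi μ).map (fun ω => (ω i, ω j)) = (μ i).prod (μ j) := by
  classical
  refine (Measure.prod_eq fun s t hs ht => ?_).symm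
  rw [Measure.map_apply ((measurable_pi_apply i).prodMk (measurable_pi_apply j)) (hs.prod ht)]
  have hpre : (fun ω : ι → X => (ω i, ω j)) ⁻¹' (s ×ˢ t)
      = Set.pi Set.univ (fun k => if k = i then s else if k = j then t else Set.univ) := by
    ext ω
    simp only [Set.mem_preimage, Set.mem_prod, Set.mem_pi, Set.mem_univ, true_implies]
    constructor
    · rintro ⟨h1, h2⟩ k
      split_ifs with hk hk'
      · subst hk; exact h1
      · subst hk'; exact h2
      · trivial
    · intro h
      refine ⟨?_, ?_⟩
      · have := h i; simpa using this
      · have := h j; simpa [hij.symm] using this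
  rw [hpre, Measure.pi_pi]
  have hval : ∀ k : ι, μ k (if k = i then s else if k = j then t else Set.univ)
      = (if k = i then μ i s else 1) * (if k = j then μ j t else 1) := by
    intro k
    by_cases hk : k = i
    · subst hk; simp [hij]
    · by_cases hk' : k = j
      · subst hk'; simp [hk]
      · simp [hk, hk']
  simp_rw [hval]
  rw [Finset.prod_mul_distrib]
  simp

lemma aux_integrable_bdd {α : Type*} [MeasurableSpace α] {μ : Measure α} [IsFiniteMeasure μ]
    {g : α → ℝ} (hm : AEStronglyMeasurable g μ) {M : ℝ} (hb : ∀ x, |g x| ≤ M) :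
    Integrable g μ :=
  Integrable.mono' (integrable_const M) hm (Filter.Eventually.of_forall fun x => hb x)

lemma aux_sum_diag (n : ℕ) (d e : ℝ) :
    ∑ k : Fin n, ∑ l : Fin n, (if k = l then d else e)
      = (n : ℝ) * d + ((n : ℝ) ^ 2 - n) * e := by
  have h : ∀ k l : Fin n, (if k = l then d else e) = e + (if k = l then d - e else 0) := by
    intro k l; split_ifs <;> ring
  simp_rw [h, Finset.sum_add_distrib, Finset.sum_ite_eq, Finset.mem_univ, if_true,
    Finset.sum_const, Finset.card_univ, Fintype.card_fin, nsmul_eq_mul]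
  ring

end aux

/-- Balanced positive definiteness implies nonnegativity of the energy of the difference
of two probability measures: `K(Q) − 2E(Q,Q') + K(Q') ≥ 0`. -/
theorem stmt_6 {X : Type*} [TopologicalSpace X] [PolishSpace X]
    [MeasurableSpace X] [BorelSpace X]
    (c : X → X → ℝ)
    (hc_cont : Continuous fun p : X × X => c p.1 p.2)
    (hc_bdd : ∃ M : ℝ, ∀ x y, |c x y| ≤ M)
    (hc_symm : ∀ x y, c x y = c y x)
    (hbpd : ∀ (n : ℕ) (x : Fin n → X) (a : Fin n → ℝ), ∑ i, a i = 0 →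
      0 ≤ ∑ i, ∑ j, c (x i) (x j) * a i * a j)
    (K : Measure X → ℝ)
    (hK : ∀ Q : Measure X, K Q = ∫ x, ∫ y, c x y ∂Q ∂Q)
    (E : Measure X → Measure X → ℝ)
    (hE : ∀ Q Q' : Measure X, E Q Q' = ∫ x, ∫ y, c x y ∂Q' ∂Q) :
    ∀ Q Q' : Measure X, IsProbabilityMeasure Q → IsProbabilityMeasure Q' →
      0 ≤ K Q - 2 * E Q Q' + K Q' := by
  classical
  intro Q Q' hQ hQ'
  haveI := hQ; haveI := hQ'
  obtain ⟨M, hM⟩ := hc_bdd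
  set f : X × X → ℝ := fun p => c p.1 p.2 with hf_def
  have hfc : Continuous f := hc_cont
  have hfm : Measurable f := hfc.measurable
  have hint_prod : ∀ (μ ν : Measure X), IsProbabilityMeasure μ → IsProbabilityMeasure ν →
      Integrable f (μ.prod ν) := by
    intro μ ν hμ hν
    haveI := hμ; haveI := hν
    exact aux_integrable_bdd hfc.aestronglyMeasurable (fun p => hM p.1 p.2)
  have hprod_eval : ∀ (μ ν : Measure X), IsProbabilityMeasure μ → IsProbabilityMeasure ν →
      ∫ p, f p ∂(μ.prod ν) = ∫ x, ∫ y, c x y ∂ν ∂μ := by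
    intro μ ν hμ hν
    haveI := hμ; haveI := hν
    exact integral_prod f (hint_prod μ ν hμ hν)
  rw [hK, hK, hE]
  set DQ := ∫ x, c x x ∂Q with hDQ
  set DQ' := ∫ x, c x x ∂Q' with hDQ'
  set KQ := ∫ x, ∫ y, c x y ∂Q ∂Q with hKQ
  set KQ' := ∫ x, ∫ y, c x y ∂Q' ∂Q' with hKQ'
  set EE := ∫ x, ∫ y, c x y ∂Q' ∂Q with hEE
  set EE' := ∫ x, ∫ y, c x y ∂Q ∂Q' with hEE2
  -- Fubini: EE' = EE
  have hEEsymm : EE' = EE := by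
    have hintc : Integrable (Function.uncurry fun x y => c x y) (Q'.prod Q) :=
      hint_prod Q' Q hQ' hQ
    have hsw := integral_integral_swap (f := fun x y => c x y) (μ := Q') (ν := Q) hintc
    rw [hEE2, hsw, hEE]
    refine integral_congr_ae (Filter.Eventually.of_forall fun y => ?_)
    exact integral_congr_ae (Filter.Eventually.of_forall fun x => hc_symm x y)
  -- key inequality for each n ≥ 1
  have key : ∀ n : ℕ, 1 ≤ n →
      KQ + KQ' - DQ - DQ' ≤ (n : ℝ) * (KQ - 2 * EE + KQ') := by
    intro n hn1
    have hn0 : (0 : ℝ) < n := by exact_mod_cast hn1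
    set μs : Fin n ⊕ Fin n → Measure X := Sum.elim (fun _ => Q) (fun _ => Q') with hμs
    have hPμ : ∀ i, IsProbabilityMeasure (μs i) := by
      rintro (k | k)
      · simpa [hμs] using hQ
      · simpa [hμs] using hQ'
    haveI := hPμ
    set π := Measure.pi μs with hπ
    haveI : IsProbabilityMeasure π := by rw [hπ]; infer_instance
    set a : Fin n ⊕ Fin n → ℝ := Sum.elim (fun _ => (n : ℝ)⁻¹) (fun _ => -(n : ℝ)⁻¹) with ha
    have hasum : ∑ i, a i = 0 := by
      simp [ha, Fintype.sum_sum_type, Finset.sum_const, Finset.card_univ, nsmul_eq_mul]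
    -- pointwise nonnegativity from balanced positive definiteness
    have hpt : ∀ ω : Fin n ⊕ Fin n → X, 0 ≤ ∑ i, ∑ j, c (ω i) (ω j) * a i * a j := by
      intro ω
      set e := (Fintype.equivFin (Fin n ⊕ Fin n)).symm with he
      have h0 : ∑ i, a (e i) = 0 := by rw [Equiv.sum_comp e a]; exact hasum
      have h1 := hbpd _ (fun i => ω (e i)) (fun i => a (e i)) h0
      calc (0 : ℝ) ≤ ∑ i, ∑ j, c (ω (e i)) (ω (e j)) * a (e i) * a (e j) := h1
        _ = ∑ i, ∑ j, c (ω i) (ω j) * a i * a j := by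
            rw [← Equiv.sum_comp e (fun i => ∑ j, c (ω i) (ω j) * a i * a j)]
            refine Finset.sum_congr rfl fun i _ => ?_
            exact Equiv.sum_comp e (fun j => c (ω (e i)) (ω j) * a (e i) * a j)
    have hmeas : ∀ i j, Measurable fun ω : Fin n ⊕ Fin n → X => c (ω i) (ω j) := by
      intro i j
      have hpm : Measurable fun ω : Fin n ⊕ Fin n → X => (ω i, ω j) :=
        (measurable_pi_apply i).prodMk (measurable_pi_apply j)
      exact hfm.comp hpm
    have hint : ∀ i j, Integrable (fun ω : Fin n ⊕ Fin n → X => c (ω i) (ω j)) π :=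
      fun i j => aux_integrable_bdd (hmeas i j).aestronglyMeasurable (fun ω => hM _ _)
    have hterm : ∀ i j, Integrable (fun ω : Fin n ⊕ Fin n → X => c (ω i) (ω j) * a i * a j) π :=
      fun i j => ((hint i j).mul_const _).mul_const _
    have hI0 : 0 ≤ ∫ ω, ∑ i, ∑ j, c (ω i) (ω j) * a i * a j ∂π :=
      integral_nonneg hpt
    have hIsum : ∫ ω, ∑ i, ∑ j, c (ω i) (ω j) * a i * a j ∂π
        = ∑ i, ∑ j, (∫ ω, c (ω i) (ω j) ∂π) * a i * a j := by
      rw [integral_finset_sum _ fun i _ => integrable_finset_sum _ fun j _ => hterm i j]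
      refine Finset.sum_congr rfl fun i _ => ?_
      rw [integral_finset_sum _ fun j _ => hterm i j]
      refine Finset.sum_congr rfl fun j _ => ?_
      rw [integral_mul_const, integral_mul_const]
    have hVdiag : ∀ i, ∫ ω, c (ω i) (ω i) ∂π = ∫ x, c x x ∂(μs i) := by
      intro i
      have hcm : Continuous fun x : X => c x x :=
        hc_cont.comp (continuous_id.prodMk continuous_id)
      rw [← aux_pi_map_eval μs i]
      have hg : Measurable fun ω : Fin n ⊕ Fin n → X => ω i := measurable_pi_apply i
      have hsm : AEStronglyMeasurable (fun x : X => c x x)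
          ((Measure.pi μs).map (fun ω => ω i)) := hcm.aestronglyMeasurable
      exact (integral_map hg.aemeasurable hsm).symm
    have hVpair : ∀ i j, i ≠ j →
        ∫ ω, c (ω i) (ω j) ∂π = ∫ x, ∫ y, c x y ∂(μs j) ∂(μs i) := by
      intro i j hij
      have h1 : ∫ ω, c (ω i) (ω j) ∂π = ∫ p, f p ∂((μs i).prod (μs j)) := by
        rw [← aux_pi_map_pair μs hij]
        have hg : Measurable fun ω : Fin n ⊕ Fin n → X => (ω i, ω j) :=
          (measurable_pi_apply i).prodMk (measurable_pi_apply j)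
        have hsm : AEStronglyMeasurable f
            ((Measure.pi μs).map (fun ω => (ω i, ω j))) := hfc.aestronglyMeasurable
        exact (integral_map hg.aemeasurable hsm).symm
      rw [h1, hprod_eval _ _ (hPμ i) (hPμ j)]
    have hV_ll : ∀ k l : Fin n,
        ∫ ω, c (ω (Sum.inl k)) (ω (Sum.inl l)) ∂π = if k = l then DQ else KQ := by
      intro k l
      by_cases hkl : k = l
      · subst hkl
        rw [if_pos rfl]
        simpa [hμs] using hVdiag (Sum.inl k)
      · rw [if_neg hkl]
        have := hVpair (Sum.inl k) (Sum.inl l) (by simpa using hkl)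
        simpa [hμs] using this
    have hV_rr : ∀ k l : Fin n,
        ∫ ω, c (ω (Sum.inr k)) (ω (Sum.inr l)) ∂π = if k = l then DQ' else KQ' := by
      intro k l
      by_cases hkl : k = l
      · subst hkl
        rw [if_pos rfl]
        simpa [hμs] using hVdiag (Sum.inr k)
      · rw [if_neg hkl]
        have := hVpair (Sum.inr k) (Sum.inr l) (by simpa using hkl)
        simpa [hμs] using this
    have hV_lr : ∀ k l : Fin n,
        ∫ ω, c (ω (Sum.inl k)) (ω (Sum.inr l)) ∂π = EE := by
      intro k l
      have := hVpair (Sum.inl k) (Sum.inr l) (by simp)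
      simpa [hμs] using this
    have hV_rl : ∀ k l : Fin n,
        ∫ ω, c (ω (Sum.inr k)) (ω (Sum.inl l)) ∂π = EE' := by
      intro k l
      have := hVpair (Sum.inr k) (Sum.inl l) (by simp)
      simpa [hμs] using this
    have hexp : ∑ i, ∑ j, (∫ ω, c (ω i) (ω j) ∂π) * a i * a j
        = ((n : ℝ) * DQ + ((n : ℝ) ^ 2 - n) * KQ) * ((n : ℝ)⁻¹ * (n : ℝ)⁻¹)
          + ((n : ℝ) * DQ' + ((n : ℝ) ^ 2 - n) * KQ') * ((n : ℝ)⁻¹ * (n : ℝ)⁻¹)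
          - ((n : ℝ) ^ 2 * EE) * ((n : ℝ)⁻¹ * (n : ℝ)⁻¹)
          - ((n : ℝ) ^ 2 * EE') * ((n : ℝ)⁻¹ * (n : ℝ)⁻¹) := by
      rw [Fintype.sum_sum_type]
      simp only [Fintype.sum_sum_type, ha, Sum.elim_inl, Sum.elim_inr]
      simp only [hV_ll, hV_rr, hV_lr, hV_rl]
      simp only [Finset.sum_add_distrib]
      have hmulsum : ∀ (g : Fin n → Fin n → ℝ) (b b' : ℝ),
          ∑ k, ∑ l, g k l * b * b' = (∑ k, ∑ l, g k l) * (b * b') := by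
        intro g b b'
        simp_rw [mul_assoc, ← Finset.sum_mul]
      rw [hmulsum (fun k l => if k = l then DQ else KQ), hmulsum (fun _ _ => EE),
        hmulsum (fun _ _ => EE'), hmulsum (fun k l => if k = l then DQ' else KQ'),
        aux_sum_diag, aux_sum_diag]
      simp only [Finset.sum_const, Finset.card_univ, Fintype.card_fin, nsmul_eq_mul]
      ring
    rw [hIsum, hexp, hEEsymm] at hI0
    have hne : (n : ℝ) ≠ 0 := ne_of_gt hn0
    have hI1 : 0 ≤ ((DQ + DQ' - KQ - KQ') + (n : ℝ) * (KQ - 2 * EE + KQ')) * (n : ℝ)⁻¹ := by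
      refine le_of_le_of_eq hI0 ?_
      field_simp
      ring
    have hI2 := (mul_nonneg_iff_of_pos_right (inv_pos.mpr hn0)).mp hI1
    linarith
  -- take n → ∞
  by_contra hD
  push_neg at hD
  obtain ⟨m, hm⟩ := exists_nat_gt ((KQ + KQ' - DQ - DQ') / (KQ - 2 * EE + KQ'))
  have hkey := key (m + 1) (Nat.le_add_left 1 m)
  have hm' : (m : ℝ) * (KQ - 2 * EE + KQ') < KQ + KQ' - DQ - DQ' :=
    (div_lt_iff_of_neg hD).mp hm
  have hc1 : ((m + 1 : ℕ) : ℝ) = (m : ℝ) + 1 := by push_cast; ring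
  rw [hc1] at hkey
  nlinarith [hkey, hm', hD]
end

section
/- Under the setting of the mixture formula, if K is convex on probability measures (of finite energy) then for every ν ∈ P(P(X)) concentrated on {K < ∞} with barycenter μ: ∫∫ c dμ⊗μ ≤ ∫_{P(X)} K(Q) dν(Q). That is, the decorrelated measure has energy no larger than any mixture of product measures with the same marginal. -/
open MeasureTheory ENNReal ProbabilityTheory

/-- If `K` is convex on probability measures then the energy of the barycenter `μ` of `ν`
is at most the average energy `∫ K dν`. -/
theorem stmt_12 {X : Type*} [TopologicalSpace X] [PolishSpace X]
    [MeasurableSpace X] [BorelSpace X]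
    (c : X → X → ℝ)
    (hc_meas : Measurable fun p : X × X => c p.1 p.2)
    (hc_bdd : ∃ M : ℝ, ∀ x y, |c x y| ≤ M)
    (hc_symm : ∀ x y, c x y = c y x)
    (hc_nonneg : ∀ x y, 0 ≤ c x y)
    (K : Measure X → ℝ)
    (hK : ∀ Q : Measure X, K Q = ∫ x, ∫ y, c x y ∂Q ∂Q)
    (hconv : ∀ (Q Q' : Measure X), IsProbabilityMeasure Q → IsProbabilityMeasure Q' →
      ∀ t : ℝ, 0 ≤ t → t ≤ 1 →
        K (ENNReal.ofReal t • Q + ENNReal.ofReal (1 - t) • Q')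
          ≤ t * K Q + (1 - t) * K Q')
    (ν : Measure (Measure X)) [IsProbabilityMeasure ν]
    (hν : ∀ᵐ Q ∂ν, IsProbabilityMeasure Q)
    (μ : Measure X) (hμ : μ = ν.join) :
    ∫ p : X × X, c p.1 p.2 ∂(μ.prod μ) ≤ ∫ Q, K Q ∂ν := by
  obtain ⟨M, hM⟩ := hc_bdd
  -- the truncated cost in ℝ≥0∞
  set φ : X → X → ℝ≥0∞ := fun x y => ENNReal.ofReal (c x y) with hφdef
  have hφ_meas : Measurable fun p : X × X => φ p.1 p.2 := hc_meas.ennreal_ofReal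
  have hφ_le : ∀ x y, φ x y ≤ ENNReal.ofReal M := fun x y =>
    ofReal_le_ofReal ((le_abs_self _).trans (hM x y))
  -- the truncation map on measures
  set r : Measure X → Measure X := fun Q => if Q Set.univ = 1 then Q else 0 with hrdef
  have hr_meas : Measurable r := by
    apply Measure.measurable_of_measurable_coe
    intro s hs
    have : (fun Q : Measure X => r Q s)
        = fun Q : Measure X => if Q Set.univ = 1 then Q s else 0 := by
      funext Q; by_cases h : Q Set.univ = 1 <;> simp [hrdef, h]
    rw [this]
    exact Measurable.ite ((Measure.measurable_coe MeasurableSet.univ)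
      (measurableSet_singleton 1)) (Measure.measurable_coe hs) measurable_const
  have hr_prob : ∀ Q : Measure X, IsProbabilityMeasure Q → r Q = Q := fun Q hQ => by
    simp [hrdef, hQ.measure_univ]
  have hr_le : ∀ Q : Measure X, r Q Set.univ ≤ 1 := by
    intro Q
    by_cases h : Q Set.univ = 1 <;> simp [hrdef, h]
  -- kernels
  set κ₁ : Kernel (X × Measure X) X := ⟨fun p => r p.2, hr_meas.comp measurable_snd⟩ with hκ₁
  haveI : IsFiniteKernel κ₁ := ⟨⟨1, one_lt_top, fun a => hr_le a.2⟩⟩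
  set κ₂ : Kernel (Measure X) X := ⟨r, hr_meas⟩ with hκ₂
  haveI : IsFiniteKernel κ₂ := ⟨⟨1, one_lt_top, fun a => hr_le a⟩⟩
  set κ₃ : Kernel (Measure X × Measure X) X := ⟨fun p => r p.1, hr_meas.comp measurable_fst⟩
    with hκ₃
  haveI : IsFiniteKernel κ₃ := ⟨⟨1, one_lt_top, fun a => hr_le a.1⟩⟩
  -- the inner integral
  set F : X × Measure X → ℝ≥0∞ := fun p => ∫⁻ y, φ p.1 y ∂(r p.2) with hFdef
  have hF_meas : Measurable F := by
    have : Measurable fun p : X × Measure X => ∫⁻ y, (fun q : (X × Measure X) × X =>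
        φ q.1.1 q.2) (p, y) ∂κ₁ p :=
      Measurable.lintegral_kernel_prod_right' (hφ_meas.comp
        (measurable_fst.fst.prodMk measurable_snd))
    exact this
  have hF_le : ∀ p, F p ≤ ENNReal.ofReal M := by
    intro p
    calc F p ≤ ∫⁻ _, ENNReal.ofReal M ∂(r p.2) := lintegral_mono fun y => hφ_le _ _
    _ = ENNReal.ofReal M * r p.2 Set.univ := by rw [lintegral_const]
    _ ≤ ENNReal.ofReal M * 1 := by gcongr; exact hr_le _
    _ = ENNReal.ofReal M := mul_one _
  -- the bilinear energy
  set L : Measure X → Measure X → ℝ≥0∞ := fun Q Q' => ∫⁻ x, F (x, Q') ∂(r Q) with hLdef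
  have hL_le : ∀ Q Q', L Q Q' ≤ ENNReal.ofReal M := by
    intro Q Q'
    calc L Q Q' ≤ ∫⁻ _, ENNReal.ofReal M ∂(r Q) := lintegral_mono fun x => hF_le _
    _ = ENNReal.ofReal M * r Q Set.univ := by rw [lintegral_const]
    _ ≤ ENNReal.ofReal M * 1 := by gcongr; exact hr_le _
    _ = ENNReal.ofReal M := mul_one _
  have hL_ne_top : ∀ Q Q', L Q Q' ≠ ∞ := fun Q Q' =>
    ((hL_le Q Q').trans_lt ofReal_lt_top).ne
  have hL_meas : Measurable fun p : Measure X × Measure X => L p.1 p.2 := by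
    have : Measurable fun p : Measure X × Measure X => ∫⁻ x, (fun q :
        (Measure X × Measure X) × X => F (q.2, q.1.2)) (p, x) ∂κ₃ p :=
      Measurable.lintegral_kernel_prod_right' (hF_meas.comp
        (measurable_snd.prodMk measurable_fst.snd))
    exact this
  have hLdiag_meas : Measurable fun Q => L Q Q :=
    hL_meas.comp (measurable_id.prodMk measurable_id)
  -- integrability of bounded functions over finite measures
  have hint : ∀ (P : Measure X) [IsFiniteMeasure P] (x : X), Integrable (fun y => c x y) P := by
    intro P _ x
    refine Integrable.mono' (integrable_const M)
      ((hc_meas.comp measurable_prodMk_left).aestronglyMeasurable) ?_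
    exact Filter.Eventually.of_forall fun y => by simpa [Real.norm_eq_abs] using hM x y
  -- relation between real double integral and L for probability measures
  have hBL : ∀ (Q Q' : Measure X), IsProbabilityMeasure Q → IsProbabilityMeasure Q' →
      ∫ x, ∫ y, c x y ∂Q' ∂Q = (L Q Q').toReal := by
    intro Q Q' hQ hQ'
    have hinner : ∀ x : X, ∫ y, c x y ∂Q' = (F (x, Q')).toReal := by
      intro x
      rw [hFdef]
      simp only [hr_prob Q' hQ']
      exact integral_eq_lintegral_of_nonneg_ae
        (Filter.Eventually.of_forall fun y => hc_nonneg x y)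
        ((hc_meas.comp measurable_prodMk_left).aestronglyMeasurable)
    simp only [hinner]
    have hmeas : Measurable fun x => (F (x, Q')).toReal :=
      (hF_meas.comp (measurable_id.prodMk measurable_const)).ennreal_toReal
    rw [integral_eq_lintegral_of_nonneg_ae
      (Filter.Eventually.of_forall fun x => ENNReal.toReal_nonneg) hmeas.aestronglyMeasurable]
    rw [hLdef]
    simp only [hr_prob Q hQ]
    congr 1
    refine lintegral_congr fun x => ?_
    rw [ofReal_toReal ((hF_le (x, Q')).trans_lt ofReal_lt_top).ne]
  -- key convexity consequence
  have hkey : ∀ (Q Q' : Measure X), IsProbabilityMeasure Q → IsProbabilityMeasure Q' →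
      2 * L Q Q' ≤ L Q Q + L Q' Q' := by
    intro Q Q' hQ hQ'
    have h2 := hconv Q Q' hQ hQ' (1/2) (by norm_num) (by norm_num)
    have h12 : (1 : ℝ) - 1/2 = 1/2 := by norm_num
    rw [h12] at h2
    set a : ℝ≥0∞ := ENNReal.ofReal (1/2) with hadef
    have ha0 : a ≠ 0 := by simp [hadef]
    have hat : a ≠ ∞ := by simp [hadef]
    have hatr : a.toReal = 1/2 := by rw [hadef, toReal_ofReal]; norm_num
    set m : Measure X := a • Q + a • Q' with hmdef
    -- expand integrals over m
    have hexp : ∀ g : X → ℝ, Integrable g Q → Integrable g Q' →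
        ∫ x, g x ∂m = (1/2) * ∫ x, g x ∂Q + (1/2) * ∫ x, g x ∂Q' := by
      intro g hgQ hgQ'
      rw [hmdef, integral_add_measure ((integrable_smul_measure ha0 hat).mpr hgQ)
        ((integrable_smul_measure ha0 hat).mpr hgQ'),
        integral_smul_measure, integral_smul_measure, hatr]
      simp [smul_eq_mul]
    -- B P := x ↦ ∫ y, c x y ∂P is measurable and bounded, for P probability
    have hBmeas : ∀ (P : Measure X), IsProbabilityMeasure P →
        Measurable fun x => ∫ y, c x y ∂P := by
      intro P hP
      have : (fun x => ∫ y, c x y ∂P) = fun x => (F (x, P)).toReal := by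
        funext x
        rw [hFdef]
        simp only [hr_prob P hP]
        exact integral_eq_lintegral_of_nonneg_ae
          (Filter.Eventually.of_forall fun y => hc_nonneg x y)
          ((hc_meas.comp measurable_prodMk_left).aestronglyMeasurable)
      rw [this]
      exact (hF_meas.comp (measurable_id.prodMk measurable_const)).ennreal_toReal
    have hBbdd : ∀ (P : Measure X), IsProbabilityMeasure P → ∀ x,
        |∫ y, c x y ∂P| ≤ M := by
      intro P hP x
      have h1 : |∫ y, c x y ∂P| ≤ ∫ y, |c x y| ∂P := by
        simpa [Real.norm_eq_abs] using
          norm_integral_le_integral_norm (μ := P) (fun y => c x y)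
      have h2 : ∫ y, |c x y| ∂P ≤ ∫ y, M ∂P :=
        integral_mono_of_nonneg (Filter.Eventually.of_forall fun y => abs_nonneg _)
          (integrable_const M) (Filter.Eventually.of_forall fun y => hM x y)
      calc |∫ y, c x y ∂P| ≤ ∫ y, M ∂P := h1.trans h2
      _ = M := by simp
    have hBint : ∀ (P P' : Measure X), IsProbabilityMeasure P → IsProbabilityMeasure P' →
        Integrable (fun x => ∫ y, c x y ∂P') P := by
      intro P P' hP hP'
      refine Integrable.mono' (integrable_const M) (hBmeas P' hP').aestronglyMeasurable ?_
      exact Filter.Eventually.of_forall fun x => by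
        simpa [Real.norm_eq_abs] using hBbdd P' hP' x
    -- inner expansion
    have hinner : ∀ x : X, ∫ y, c x y ∂m
        = (1/2) * ∫ y, c x y ∂Q + (1/2) * ∫ y, c x y ∂Q' := fun x =>
      hexp _ (hint Q x) (hint Q' x)
    -- full expansion of K m
    set B : Measure X → Measure X → ℝ := fun P P' => ∫ x, ∫ y, c x y ∂P' ∂P with hBdef
    have hKm : K m = (1/4) * (B Q Q + B Q Q' + B Q' Q + B Q' Q') := by
      rw [hK]
      have step1 : ∫ x, ∫ y, c x y ∂m ∂m
          = ∫ x, ((1/2) * ∫ y, c x y ∂Q + (1/2) * ∫ y, c x y ∂Q') ∂m := by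
        exact integral_congr_ae (Filter.Eventually.of_forall hinner)
      rw [step1]
      have hgQ : Integrable (fun x => (1/2) * ∫ y, c x y ∂Q + (1/2) * ∫ y, c x y ∂Q') Q :=
        (((hBint Q Q hQ hQ).const_mul _).add ((hBint Q Q' hQ hQ').const_mul _))
      have hgQ' : Integrable (fun x => (1/2) * ∫ y, c x y ∂Q + (1/2) * ∫ y, c x y ∂Q') Q' :=
        (((hBint Q' Q hQ' hQ).const_mul _).add ((hBint Q' Q' hQ' hQ').const_mul _))
      rw [hexp _ hgQ hgQ']
      rw [integral_add ((hBint Q Q hQ hQ).const_mul _) ((hBint Q Q' hQ hQ').const_mul _),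
        integral_add ((hBint Q' Q hQ' hQ).const_mul _) ((hBint Q' Q' hQ' hQ').const_mul _),
        integral_const_mul, integral_const_mul, integral_const_mul, integral_const_mul]
      rw [hBdef]
      ring
    -- symmetry of B
    have hBsymm : B Q Q' = B Q' Q := by
      have hub : Integrable (Function.uncurry fun x y => c x y) (Q.prod Q') := by
        refine Integrable.mono' (integrable_const M) hc_meas.aestronglyMeasurable ?_
        exact Filter.Eventually.of_forall fun p => by simpa [Real.norm_eq_abs, Function.uncurry_def] using hM p.1 p.2
      rw [hBdef]
      simp only
      rw [integral_integral_swap hub]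
      simp_rw [fun y x => hc_symm x y]
    -- combine
    have hKQ : K Q = B Q Q := hK Q
    have hKQ' : K Q' = B Q' Q' := hK Q'
    rw [hKm, hKQ, hKQ', hBsymm] at h2
    have hreal : 2 * B Q' Q ≤ B Q Q + B Q' Q' := by nlinarith [h2]
    -- transfer to ℝ≥0∞
    have e1 : B Q' Q = (L Q' Q).toReal := hBL Q' Q hQ' hQ
    have e2 : B Q Q = (L Q Q).toReal := hBL Q Q hQ hQ
    have e3 : B Q' Q' = (L Q' Q').toReal := hBL Q' Q' hQ' hQ'
    rw [e1, e2, e3] at hreal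
    -- note L Q Q' = L Q' Q? we prove instead 2 * L Q' Q ≤ ... then need L Q Q'.
    -- use symmetry at the L level via hBL and hBsymm:
    have eL : (L Q Q').toReal = (L Q' Q).toReal := by
      rw [← hBL Q Q' hQ hQ', ← hBL Q' Q hQ' hQ]
      exact hBsymm
    have hLL : L Q Q' = L Q' Q :=
      (ENNReal.toReal_eq_toReal_iff' (hL_ne_top _ _) (hL_ne_top _ _)).mp eL
    rw [hLL]
    have h2t : (2 * L Q' Q).toReal ≤ (L Q Q + L Q' Q').toReal := by
      rw [toReal_mul, toReal_add (hL_ne_top _ _) (hL_ne_top _ _)]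
      simpa using hreal
    exact (toReal_le_toReal (by simp [mul_ne_top, hL_ne_top]) (by
      simp [add_ne_top, hL_ne_top])).mp h2t
  -- μ is a probability measure
  haveI hμprob : IsProbabilityMeasure μ := by
    constructor
    rw [hμ, Measure.join_apply MeasurableSet.univ,
      lintegral_congr_ae (hν.mono fun Q hQ => hQ.measure_univ)]
    simp
  have hG_meas : Measurable fun x : X => ∫⁻ Q', F (x, Q') ∂ν :=
    Measurable.lintegral_prod_right' (f := fun p : X × Measure X => F p) hF_meas
  have step1 : ∫⁻ p : X × X, φ p.1 p.2 ∂(μ.prod μ) = ∫⁻ Q, ∫⁻ Q', L Q Q' ∂ν ∂ν := by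
    rw [lintegral_prod _ hφ_meas.aemeasurable]
    have hinner : ∀ x : X, ∫⁻ y, φ x y ∂μ = ∫⁻ Q', F (x, Q') ∂ν := by
      intro x
      rw [hμ, Measure.lintegral_join (f := fun y => φ x y)
        (by exact (hφ_meas.comp measurable_prodMk_left).aemeasurable)]
      refine lintegral_congr_ae (hν.mono fun Q' hQ' => ?_)
      simp only [hFdef, hr_prob Q' hQ']
    calc ∫⁻ x, ∫⁻ y, φ x y ∂μ ∂μ = ∫⁻ x, ∫⁻ Q', F (x, Q') ∂ν ∂μ := lintegral_congr hinner
    _ = ∫⁻ Q, ∫⁻ x, ∫⁻ Q', F (x, Q') ∂ν ∂Q ∂ν := by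
        rw [hμ, Measure.lintegral_join hG_meas.aemeasurable]
    _ = ∫⁻ Q, ∫⁻ Q', L Q Q' ∂ν ∂ν := by
        refine lintegral_congr_ae (hν.mono fun Q hQ => ?_)
        haveI := hQ
        show ∫⁻ x, ∫⁻ Q', F (x, Q') ∂ν ∂Q = ∫⁻ Q', L Q Q' ∂ν
        rw [lintegral_lintegral_swap
          ((by exact hF_meas :
            Measurable (Function.uncurry fun (x : X) (Q' : Measure X) => F (x, Q'))).aemeasurable)]
        refine lintegral_congr fun Q' => ?_
        rw [hLdef]; simp only [hr_prob Q hQ]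
  have hLHS : ∫ p : X × X, c p.1 p.2 ∂(μ.prod μ)
      = (∫⁻ Q, ∫⁻ Q', L Q Q' ∂ν ∂ν).toReal := by
    rw [integral_eq_lintegral_of_nonneg_ae (μ := μ.prod μ)
      (f := fun p : X × X => c p.1 p.2)
      (Filter.Eventually.of_forall fun p => hc_nonneg p.1 p.2)
      hc_meas.aestronglyMeasurable]
    exact congrArg ENNReal.toReal step1
  have hRHS : ∫ Q, K Q ∂ν = (∫⁻ Q, L Q Q ∂ν).toReal := by
    have hae : K =ᵐ[ν] fun Q => (L Q Q).toReal := hν.mono fun Q hQ => by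
      rw [hK Q, hBL Q Q hQ hQ]
    rw [integral_congr_ae hae,
      integral_eq_lintegral_of_nonneg_ae
        (Filter.Eventually.of_forall fun Q => ENNReal.toReal_nonneg)
        (hLdiag_meas.ennreal_toReal).aestronglyMeasurable]
    congr 1
    exact lintegral_congr fun Q => ofReal_toReal (hL_ne_top Q Q)
  rw [hLHS, hRHS]
  have hfin : ∫⁻ Q, L Q Q ∂ν ≠ ∞ := by
    refine ((lintegral_mono fun Q => hL_le Q Q).trans_lt ?_).ne
    rw [lintegral_const, measure_univ, mul_one]
    exact ofReal_lt_top
  refine ENNReal.toReal_mono hfin ?_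
  have hQ'meas : ∀ Q : Measure X, Measurable fun Q' => L Q Q' :=
    fun Q => hL_meas.comp (measurable_const.prodMk measurable_id)
  have houter_meas : Measurable fun Q => ∫⁻ Q', L Q Q' ∂ν :=
    Measurable.lintegral_prod_right' (f := fun p : Measure X × Measure X => L p.1 p.2) hL_meas
  have key2 : 2 * ∫⁻ Q, ∫⁻ Q', L Q Q' ∂ν ∂ν ≤ 2 * ∫⁻ Q, L Q Q ∂ν := by
    calc 2 * ∫⁻ Q, ∫⁻ Q', L Q Q' ∂ν ∂ν = ∫⁻ Q, ∫⁻ Q', 2 * L Q Q' ∂ν ∂ν := by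
          rw [← lintegral_const_mul 2 houter_meas]
          exact lintegral_congr fun Q => (lintegral_const_mul 2 (hQ'meas Q)).symm
    _ ≤ ∫⁻ Q, (L Q Q + ∫⁻ Q', L Q' Q' ∂ν) ∂ν := by
          refine lintegral_mono_ae (hν.mono fun Q hQ => ?_)
          calc ∫⁻ Q', 2 * L Q Q' ∂ν ≤ ∫⁻ Q', (L Q Q + L Q' Q') ∂ν :=
                lintegral_mono_ae (hν.mono fun Q' hQ' => hkey Q Q' hQ hQ')
          _ = L Q Q + ∫⁻ Q', L Q' Q' ∂ν := by
                rw [lintegral_add_right _ hLdiag_meas, lintegral_const, measure_univ, mul_one]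
    _ = 2 * ∫⁻ Q, L Q Q ∂ν := by
          rw [lintegral_add_right _ measurable_const, lintegral_const, measure_univ, mul_one,
            two_mul]
  exact (ENNReal.mul_le_mul_iff_right (by norm_num) (by norm_num)).mp key2
end

section
/- Strict convexity transfer: if K is strictly convex on probability measures of finite energy (K(tQ+(1−t)Q') < tK(Q)+(1−t)K(Q') for Q ≠ Q', t ∈ (0,1)), then for any probability measure ν on P(X) concentrated on {K < ∞} that is not a Dirac mass, with barycenter μ, the strict inequality ∫∫ c dμ⊗μ < ∫ K(Q) dν(Q) holds. -/
open MeasureTheory ENNReal ProbabilityTheory Function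


namespace Stmt16Aux

variable {X : Type*} [MeasurableSpace X]

/-- Truncation to probability measures: keep `Q` if it is a probability measure, else `0`. -/
noncomputable def trunc (Q : Measure X) : Measure X :=
  if Q Set.univ = 1 then Q else 0

lemma measurable_trunc : Measurable (trunc (X := X)) := by
  have h : MeasurableSet {Q : Measure X | Q Set.univ = 1} :=
    (Measure.measurable_coe MeasurableSet.univ) (measurableSet_singleton 1)
  exact Measurable.ite h measurable_id measurable_const

lemma trunc_eq (Q : Measure X) [IsProbabilityMeasure Q] : trunc Q = Q := by
  simp [trunc, measure_univ]

lemma trunc_univ_le (Q : Measure X) : trunc Q Set.univ ≤ 1 := by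
  unfold trunc; split
  · exact le_of_eq ‹_›
  · simp

noncomputable def ker1 : Kernel (Measure X × X) X where
  toFun p := trunc p.1
  measurable' := measurable_trunc.comp measurable_fst

instance : IsFiniteKernel (ker1 (X := X)) :=
  ⟨⟨1, one_lt_top, fun p => trunc_univ_le p.1⟩⟩

noncomputable def ker2 : Kernel (Measure X × Measure X) X where
  toFun p := trunc p.1
  measurable' := measurable_trunc.comp measurable_fst

instance : IsFiniteKernel (ker2 (X := X)) :=
  ⟨⟨1, one_lt_top, fun p => trunc_univ_le p.1⟩⟩

/-- inner energy integral -/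
noncomputable def G (c : X → X → ℝ) (x : X) (Q : Measure X) : ℝ≥0∞ :=
  ∫⁻ y, ENNReal.ofReal (c x y) ∂(trunc Q)

/-- mutual energy -/
noncomputable def ee (c : X → X → ℝ) (Q Q' : Measure X) : ℝ≥0∞ :=
  ∫⁻ x, G c x Q' ∂(trunc Q)

variable {c : X → X → ℝ}

lemma measurable_G (hc : Measurable fun p : X × X => c p.1 p.2) :
    Measurable fun q : Measure X × X => G c q.2 q.1 := by
  have h : Measurable (uncurry fun (q : Measure X × X) (y : X) => ENNReal.ofReal (c q.2 y)) :=
    ENNReal.measurable_ofReal.comp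
      (hc.comp ((measurable_snd.comp measurable_fst).prodMk measurable_snd))
  exact h.lintegral_kernel_prod_right (κ := ker1)

lemma measurable_ee (hc : Measurable fun p : X × X => c p.1 p.2) :
    Measurable fun p : Measure X × Measure X => ee c p.1 p.2 := by
  have h : Measurable (uncurry fun (p : Measure X × Measure X) (x : X) => G c x p.2) :=
    (measurable_G hc).comp ((measurable_snd.comp measurable_fst).prodMk measurable_snd)
  exact h.lintegral_kernel_prod_right (κ := ker2)

lemma measurable_G_right (hc : Measurable fun p : X × X => c p.1 p.2) (Q : Measure X) :
    Measurable fun x : X => G c x Q :=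
  (measurable_G hc).comp (measurable_const.prodMk measurable_id)

lemma measurable_G_left (hc : Measurable fun p : X × X => c p.1 p.2) (x : X) :
    Measurable fun Q : Measure X => G c x Q :=
  (measurable_G hc).comp (measurable_id.prodMk measurable_const)

lemma G_le {M : ℝ} (hM : ∀ x y, c x y ≤ M) (x : X) (Q : Measure X)
    [IsProbabilityMeasure Q] : G c x Q ≤ ENNReal.ofReal M := by
  rw [G, trunc_eq]
  calc ∫⁻ y, ENNReal.ofReal (c x y) ∂Q ≤ ∫⁻ _, ENNReal.ofReal M ∂Q :=
        lintegral_mono fun y => ENNReal.ofReal_le_ofReal (hM x y)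
    _ = ENNReal.ofReal M := by simp [lintegral_const, measure_univ]

lemma ee_le {M : ℝ} (hM : ∀ x y, c x y ≤ M) (Q Q' : Measure X)
    [IsProbabilityMeasure Q] [IsProbabilityMeasure Q'] : ee c Q Q' ≤ ENNReal.ofReal M := by
  rw [ee, trunc_eq]
  calc ∫⁻ x, G c x Q' ∂Q ≤ ∫⁻ _, ENNReal.ofReal M ∂Q :=
        lintegral_mono fun x => G_le hM x Q'
    _ = ENNReal.ofReal M := by simp [lintegral_const, measure_univ]

lemma ee_symm (hc : Measurable fun p : X × X => c p.1 p.2)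
    (hc_symm : ∀ x y, c x y = c y x) (Q Q' : Measure X)
    [IsProbabilityMeasure Q] [IsProbabilityMeasure Q'] : ee c Q' Q = ee c Q Q' := by
  rw [ee, ee, trunc_eq, trunc_eq]
  have h1 : ∀ x, G c x Q = ∫⁻ y, ENNReal.ofReal (c y x) ∂Q := by
    intro x; rw [G, trunc_eq]
    exact lintegral_congr fun y => by rw [hc_symm]
  have h2 : ∀ x, G c x Q' = ∫⁻ y, ENNReal.ofReal (c x y) ∂Q' := fun x => by rw [G, trunc_eq]
  simp_rw [h1, h2]
  exact lintegral_lintegral_swap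
    (ENNReal.measurable_ofReal.comp
      (hc.comp (measurable_snd.prodMk measurable_fst))).aemeasurable

lemma K_eq (hc : Measurable fun p : X × X => c p.1 p.2) (hc_nonneg : ∀ x y, 0 ≤ c x y)
    {M : ℝ} (hM : ∀ x y, c x y ≤ M) (Q : Measure X) [IsProbabilityMeasure Q] :
    ∫ x, ∫ y, c x y ∂Q ∂Q = (ee c Q Q).toReal := by
  have h1 : ∀ x, ∫ y, c x y ∂Q = (G c x Q).toReal := by
    intro x
    rw [G, trunc_eq,
      integral_eq_lintegral_of_nonneg_ae (ae_of_all _ fun y => hc_nonneg x y)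
        (hc.comp measurable_prodMk_left).aestronglyMeasurable]
  simp_rw [h1]
  rw [integral_eq_lintegral_of_nonneg_ae (ae_of_all _ fun x => ENNReal.toReal_nonneg)
      ((measurable_G_right hc Q).ennreal_toReal).aestronglyMeasurable]
  rw [ee, trunc_eq]
  congr 1
  refine lintegral_congr fun x => ?_
  exact ENNReal.ofReal_toReal (ne_top_of_le_ne_top ENNReal.ofReal_ne_top (G_le hM x Q))

end Stmt16Aux

open Stmt16Aux

/-- Strict convexity transfer: if `K` is strictly convex on probability measures, then for any
non-Dirac mixing measure `ν` with barycenter `μ`, the energy of `μ⊗μ` is strictly smaller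
than the average energy `∫ K dν`. -/
theorem stmt_16 {X : Type*} [TopologicalSpace X] [PolishSpace X]
    [MeasurableSpace X] [BorelSpace X]
    (c : X → X → ℝ)
    (hc_meas : Measurable fun p : X × X => c p.1 p.2)
    (hc_bdd : ∃ M : ℝ, ∀ x y, |c x y| ≤ M)
    (hc_symm : ∀ x y, c x y = c y x)
    (hc_nonneg : ∀ x y, 0 ≤ c x y)
    (K : Measure X → ℝ)
    (hK : ∀ Q : Measure X, K Q = ∫ x, ∫ y, c x y ∂Q ∂Q)
    (hstrict : ∀ (Q Q' : Measure X), IsProbabilityMeasure Q → IsProbabilityMeasure Q' →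
      Q ≠ Q' → ∀ t : ℝ, 0 < t → t < 1 →
        K (ENNReal.ofReal t • Q + ENNReal.ofReal (1 - t) • Q')
          < t * K Q + (1 - t) * K Q')
    (ν : Measure (Measure X)) [IsProbabilityMeasure ν]
    (hν : ∀ᵐ Q ∂ν, IsProbabilityMeasure Q)
    (hνnotdirac : ∀ Q₀ : Measure X, ν ≠ Measure.dirac Q₀)
    (μ : Measure X) (hμ : μ = ν.join) :
    ∫ p : X × X, c p.1 p.2 ∂(μ.prod μ) < ∫ Q, K Q ∂ν := by
  subst hμ
  obtain ⟨M, hM⟩ := hc_bdd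
  have hcM : ∀ x y, c x y ≤ M := fun x y => (abs_le.mp (hM x y)).2
  set f : X × X → ℝ≥0∞ := fun p => ENNReal.ofReal (c p.1 p.2) with hf_def
  have hf : Measurable f := ENNReal.measurable_ofReal.comp hc_meas
  haveI hjoin : IsProbabilityMeasure ν.join := by
    constructor
    rw [Measure.join_apply MeasurableSet.univ]
    have : ∫⁻ Q, Q Set.univ ∂ν = ∫⁻ _, 1 ∂ν :=
      lintegral_congr_ae (hν.mono fun Q hQ => hQ.measure_univ)
    simp [this]
  -- LHS as double lintegral of ee
  have hL1 : ∫ p : X × X, c p.1 p.2 ∂(ν.join.prod ν.join)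
      = (∫⁻ p, f p ∂(ν.join.prod ν.join)).toReal :=
    integral_eq_lintegral_of_nonneg_ae (ae_of_all _ fun p => hc_nonneg _ _)
      hc_meas.aestronglyMeasurable
  -- inner: for every x
  have hFx : ∀ x, ∫⁻ y, f (x, y) ∂ν.join = ∫⁻ Q', G c x Q' ∂ν := by
    intro x
    rw [Measure.lintegral_join (f := fun y => f (x, y)) (hf.comp measurable_prodMk_left).aemeasurable]
    refine lintegral_congr_ae (hν.mono fun Q' hQ' => ?_)
    haveI := hQ'
    rw [G, trunc_eq]
  have hmeasF : Measurable fun x => ∫⁻ Q', G c x Q' ∂ν := by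
    refine Measurable.lintegral_prod_right (f := fun x Q' => G c x Q') ?_
    exact (measurable_G hc_meas).comp (measurable_swap)
  have hL2 : ∫⁻ p, f p ∂(ν.join.prod ν.join) = ∫⁻ Q, ∫⁻ Q', ee c Q Q' ∂ν ∂ν := by
    rw [lintegral_prod _ hf.aemeasurable]
    simp_rw [hFx]
    rw [Measure.lintegral_join hmeasF.aemeasurable]
    refine lintegral_congr_ae (hν.mono fun Q hQ => ?_)
    haveI := hQ
    dsimp only
    have hswap : ∫⁻ x, ∫⁻ Q', G c x Q' ∂ν ∂Q = ∫⁻ Q', ∫⁻ x, G c x Q' ∂Q ∂ν :=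
      lintegral_lintegral_swap ((measurable_G hc_meas).comp measurable_swap).aemeasurable
    rw [hswap]
    refine lintegral_congr fun Q' => ?_
    rw [ee, trunc_eq]
  -- RHS
  have hmeas_eQQ : Measurable fun Q : Measure X => ee c Q Q :=
    (measurable_ee hc_meas).comp (measurable_id.prodMk measurable_id)
  have hee_ne_top : ∀ (Q Q' : Measure X), IsProbabilityMeasure Q → IsProbabilityMeasure Q' →
      ee c Q Q' ≠ ∞ := by
    intro Q Q' hQ hQ'
    haveI := hQ; haveI := hQ'
    exact ne_top_of_le_ne_top ENNReal.ofReal_ne_top (ee_le hcM Q Q')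
  have hR1 : ∫ Q, K Q ∂ν = (∫⁻ Q, ee c Q Q ∂ν).toReal := by
    rw [integral_congr_ae (g := fun Q => (ee c Q Q).toReal)
        (hν.mono fun Q hQ => by haveI := hQ; rw [hK]; exact K_eq hc_meas hc_nonneg hcM Q)]
    rw [integral_eq_lintegral_of_nonneg_ae (ae_of_all _ fun Q => ENNReal.toReal_nonneg)
        hmeas_eQQ.ennreal_toReal.aestronglyMeasurable]
    congr 1
    refine lintegral_congr_ae (hν.mono fun Q hQ => ?_)
    exact ENNReal.ofReal_toReal (hee_ne_top Q Q hQ hQ)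
  -- strict midpoint inequality
  have hmid : ∀ Q Q' : Measure X, IsProbabilityMeasure Q → IsProbabilityMeasure Q' → Q ≠ Q' →
      ee c Q Q' < 2⁻¹ * ee c Q Q + 2⁻¹ * ee c Q' Q' := by
    intro Q Q' hQ hQ' hne
    haveI := hQ; haveI := hQ'
    set r : ℝ≥0∞ := ENNReal.ofReal (1/2) with hr_def
    have hr1 : ENNReal.ofReal (1 - 1/2 : ℝ) = r := by rw [hr_def]; norm_num
    set m : Measure X := ENNReal.ofReal (1/2 : ℝ) • Q + ENNReal.ofReal (1 - 1/2 : ℝ) • Q'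
      with hm_def
    haveI hm : IsProbabilityMeasure m := by
      constructor
      rw [hm_def, hr1]
      simp only [Measure.coe_add, Pi.add_apply, Measure.smul_apply, measure_univ,
        smul_eq_mul, mul_one]
      rw [hr_def, ← ENNReal.ofReal_add (by norm_num) (by norm_num)]
      norm_num
    have hsplit : ∀ g : X → ℝ≥0∞, ∫⁻ x, g x ∂m = r * ∫⁻ x, g x ∂Q + r * ∫⁻ x, g x ∂Q' := by
      intro g
      rw [hm_def, hr1, lintegral_add_measure, lintegral_smul_measure, lintegral_smul_measure]
      simp only [hr_def, smul_eq_mul]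
    have hGm : ∀ x, G c x m = r * G c x Q + r * G c x Q' := by
      intro x
      rw [G, trunc_eq, G, trunc_eq, G, trunc_eq]
      exact hsplit _
    have heeQQ : ∫⁻ x, G c x Q ∂Q = ee c Q Q := by rw [ee, trunc_eq]
    have heeQQ' : ∫⁻ x, G c x Q' ∂Q = ee c Q Q' := by rw [ee, trunc_eq]
    have heeQ'Q : ∫⁻ x, G c x Q ∂Q' = ee c Q Q' := by
      rw [← ee_symm hc_meas hc_symm Q Q', ee, trunc_eq]
    have heeQ'Q' : ∫⁻ x, G c x Q' ∂Q' = ee c Q' Q' := by rw [ee, trunc_eq]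
    have hexp : ∀ P : Measure X, ∫⁻ x, (r * G c x Q + r * G c x Q') ∂P
        = r * ∫⁻ x, G c x Q ∂P + r * ∫⁻ x, G c x Q' ∂P := by
      intro P
      rw [lintegral_add_left ((measurable_G_right hc_meas Q).const_mul r),
        lintegral_const_mul r (measurable_G_right hc_meas Q),
        lintegral_const_mul r (measurable_G_right hc_meas Q')]
    have heem : ee c m m = r * (r * ee c Q Q + r * ee c Q Q')
        + r * (r * ee c Q Q' + r * ee c Q' Q') := by
      rw [ee, trunc_eq]
      calc ∫⁻ x, G c x m ∂m = ∫⁻ x, (r * G c x Q + r * G c x Q') ∂m :=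
            lintegral_congr hGm
        _ = r * ∫⁻ x, (r * G c x Q + r * G c x Q') ∂Q
            + r * ∫⁻ x, (r * G c x Q + r * G c x Q') ∂Q' := hsplit _
        _ = _ := by rw [hexp Q, hexp Q', heeQQ, heeQQ', heeQ'Q, heeQ'Q']
    have ha : ee c Q Q ≠ ∞ := hee_ne_top Q Q hQ hQ
    have hb : ee c Q' Q' ≠ ∞ := hee_ne_top Q' Q' hQ' hQ'
    have hx : ee c Q Q' ≠ ∞ := hee_ne_top Q Q' hQ hQ'
    have hrne : r ≠ ∞ := ENNReal.ofReal_ne_top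
    have hrt : r.toReal = 1/2 := by rw [hr_def]; exact ENNReal.toReal_ofReal (by norm_num)
    have hA : r * ee c Q Q + r * ee c Q Q' ≠ ∞ :=
      ENNReal.add_ne_top.mpr ⟨ENNReal.mul_ne_top hrne ha, ENNReal.mul_ne_top hrne hx⟩
    have hB : r * ee c Q Q' + r * ee c Q' Q' ≠ ∞ :=
      ENNReal.add_ne_top.mpr ⟨ENNReal.mul_ne_top hrne hx, ENNReal.mul_ne_top hrne hb⟩
    have hKmval : (ee c m m).toReal
        = 1/2 * (1/2 * (ee c Q Q).toReal + 1/2 * (ee c Q Q').toReal)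
        + 1/2 * (1/2 * (ee c Q Q').toReal + 1/2 * (ee c Q' Q').toReal) := by
      rw [heem, ENNReal.toReal_add (ENNReal.mul_ne_top hrne hA) (ENNReal.mul_ne_top hrne hB)]
      rw [ENNReal.toReal_mul, ENNReal.toReal_mul]
      rw [ENNReal.toReal_add (ENNReal.mul_ne_top hrne ha) (ENNReal.mul_ne_top hrne hx),
        ENNReal.toReal_add (ENNReal.mul_ne_top hrne hx) (ENNReal.mul_ne_top hrne hb)]
      simp only [ENNReal.toReal_mul]
      rw [hrt]
    have hKQ : K Q = (ee c Q Q).toReal := by rw [hK]; exact K_eq hc_meas hc_nonneg hcM Q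
    have hKQ' : K Q' = (ee c Q' Q').toReal := by rw [hK]; exact K_eq hc_meas hc_nonneg hcM Q'
    have hKm2 : K m = (ee c m m).toReal := by rw [hK]; exact K_eq hc_meas hc_nonneg hcM m
    have hlt := hstrict Q Q' hQ hQ' hne (1/2) (by norm_num) (by norm_num)
    rw [← hm_def, hKm2, hKQ, hKQ', hKmval] at hlt
    have hreal : (ee c Q Q').toReal
        < 1/2 * (ee c Q Q).toReal + 1/2 * (ee c Q' Q').toReal := by linarith
    have hrhs : (2⁻¹ : ℝ≥0∞) * ee c Q Q + 2⁻¹ * ee c Q' Q' ≠ ∞ :=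
      ENNReal.add_ne_top.mpr ⟨ENNReal.mul_ne_top (by simp) ha, ENNReal.mul_ne_top (by simp) hb⟩
    rw [← ENNReal.toReal_lt_toReal hx hrhs]
    rw [ENNReal.toReal_add (ENNReal.mul_ne_top (by simp) ha) (ENNReal.mul_ne_top (by simp) hb),
      ENNReal.toReal_mul, ENNReal.toReal_mul]
    simp only [ENNReal.toReal_inv, ENNReal.toReal_ofNat]
    convert hreal using 2 <;> ring
  -- a.e. both coordinates are probability measures
  have hS : MeasurableSet {Q : Measure X | Q Set.univ = 1} :=
    (Measure.measurable_coe MeasurableSet.univ) (measurableSet_singleton 1)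
  have hνS : ∀ᵐ Q ∂ν, Q ∈ {Q : Measure X | Q Set.univ = 1} :=
    hν.mono fun Q hQ => hQ.measure_univ
  have hScompl : ν {Q : Measure X | Q Set.univ = 1}ᶜ = 0 := ae_iff.mp hνS
  have hprodae : ∀ᵐ p ∂ν.prod ν, IsProbabilityMeasure p.1 ∧ IsProbabilityMeasure p.2 := by
    set S := {Q : Measure X | Q Set.univ = 1} with hSdef
    have hkey : (ν.prod ν) ((S ×ˢ S)ᶜ) = 0 := by
      have hsub : ((S ×ˢ S)ᶜ : Set (Measure X × Measure X))
          ⊆ (Sᶜ ×ˢ Set.univ) ∪ (Set.univ ×ˢ Sᶜ) := by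
        intro p hp
        by_cases h1 : p.1 ∈ S
        · right; exact ⟨trivial, fun h2 => hp ⟨h1, h2⟩⟩
        · left; exact ⟨h1, trivial⟩
      refine le_antisymm (le_trans (measure_mono hsub) ?_) (zero_le ..)
      refine le_trans (measure_union_le _ _) ?_
      rw [Measure.prod_prod, Measure.prod_prod, hScompl]
      simp
    have hmemae : ∀ᵐ p ∂ν.prod ν, p ∈ S ×ˢ S := by
      rw [ae_iff]
      convert hkey using 2
      rfl
    exact hmemae.mono fun p hp => ⟨⟨hp.1⟩, ⟨hp.2⟩⟩
  -- comparison functions on the product space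
  have hhmeas : Measurable fun p : Measure X × Measure X => ee c p.1 p.2 := measurable_ee hc_meas
  have hgmeas : Measurable fun p : Measure X × Measure X =>
      2⁻¹ * ee c p.1 p.1 + 2⁻¹ * ee c p.2 p.2 :=
    ((hmeas_eQQ.comp measurable_fst).const_mul 2⁻¹).add
      ((hmeas_eQQ.comp measurable_snd).const_mul 2⁻¹)
  have hhalf : (2⁻¹ : ℝ≥0∞) + 2⁻¹ = 1 := by rw [← one_div]; exact ENNReal.add_halves 1
  have hweak : (fun p : Measure X × Measure X => ee c p.1 p.2)
      ≤ᵐ[ν.prod ν] fun p => 2⁻¹ * ee c p.1 p.1 + 2⁻¹ * ee c p.2 p.2 := by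
    refine hprodae.mono fun p hp => ?_
    rcases eq_or_ne p.1 p.2 with he | hne
    · show ee c p.1 p.2 ≤ 2⁻¹ * ee c p.1 p.1 + 2⁻¹ * ee c p.2 p.2
      rw [← he, ← add_mul, hhalf, one_mul]
    · exact le_of_lt (hmid p.1 p.2 hp.1 hp.2 hne)
  have hg_int : ∫⁻ p, (2⁻¹ * ee c p.1 p.1 + 2⁻¹ * ee c p.2 p.2) ∂(ν.prod ν)
      = ∫⁻ Q, ee c Q Q ∂ν := by
    rw [lintegral_add_left (show Measurable fun p : Measure X × Measure X =>
        2⁻¹ * ee c p.1 p.1 from (hmeas_eQQ.comp measurable_fst).const_mul 2⁻¹),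
      lintegral_const_mul 2⁻¹ (show Measurable fun p : Measure X × Measure X =>
        ee c p.1 p.1 from hmeas_eQQ.comp measurable_fst),
      lintegral_const_mul 2⁻¹ (show Measurable fun p : Measure X × Measure X =>
        ee c p.2 p.2 from hmeas_eQQ.comp measurable_snd)]
    have h1 : ∫⁻ p : Measure X × Measure X, ee c p.1 p.1 ∂(ν.prod ν)
        = ∫⁻ Q, ee c Q Q ∂ν := by
      rw [lintegral_prod (fun p => ee c p.1 p.1)
        ((hmeas_eQQ.comp measurable_fst).aemeasurable)]
      simp [lintegral_const, measure_univ]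
    have h2 : ∫⁻ p : Measure X × Measure X, ee c p.2 p.2 ∂(ν.prod ν)
        = ∫⁻ Q, ee c Q Q ∂ν := by
      rw [lintegral_prod (fun p => ee c p.2 p.2)
        ((hmeas_eQQ.comp measurable_snd).aemeasurable)]
      simp [lintegral_const, measure_univ]
    rw [h1, h2, ← add_mul, hhalf, one_mul]
  have hh_int : ∫⁻ p : Measure X × Measure X, ee c p.1 p.2 ∂(ν.prod ν)
      = ∫⁻ Q, ∫⁻ Q', ee c Q Q' ∂ν ∂ν := by
    rw [lintegral_prod _ hhmeas.aemeasurable]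
  have hI_le : ∫⁻ Q, ee c Q Q ∂ν ≤ ENNReal.ofReal M := by
    calc ∫⁻ Q, ee c Q Q ∂ν ≤ ∫⁻ _, ENNReal.ofReal M ∂ν :=
          lintegral_mono_ae (hν.mono fun Q hQ => by haveI := hQ; exact ee_le hcM Q Q)
      _ = ENNReal.ofReal M := by simp [lintegral_const, measure_univ]
  have hI_ne : ∫⁻ Q, ee c Q Q ∂ν ≠ ∞ := ne_top_of_le_ne_top ENNReal.ofReal_ne_top hI_le
  have hLle : ∫⁻ p : Measure X × Measure X, ee c p.1 p.2 ∂(ν.prod ν)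
      ≤ ∫⁻ Q, ee c Q Q ∂ν := by
    rw [← hg_int]; exact lintegral_mono_ae hweak
  have hL_ne : ∫⁻ p : Measure X × Measure X, ee c p.1 p.2 ∂(ν.prod ν) ≠ ∞ :=
    ne_top_of_le_ne_top hI_ne hLle
  have hLne : ∫⁻ p : Measure X × Measure X, ee c p.1 p.2 ∂(ν.prod ν)
      ≠ ∫⁻ Q, ee c Q Q ∂ν := by
    intro hLI
    have hsub0 : ∫⁻ p : Measure X × Measure X,
        ((2⁻¹ * ee c p.1 p.1 + 2⁻¹ * ee c p.2 p.2) - ee c p.1 p.2) ∂(ν.prod ν) = 0 := by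
      rw [lintegral_sub hhmeas hL_ne hweak, hg_int, hLI, tsub_self]
    have hae0 : (fun p : Measure X × Measure X =>
        (2⁻¹ * ee c p.1 p.1 + 2⁻¹ * ee c p.2 p.2) - ee c p.1 p.2) =ᵐ[ν.prod ν] 0 :=
      (lintegral_eq_zero_iff (hgmeas.sub hhmeas)).mp hsub0
    have hdiag : ∀ᵐ p ∂ν.prod ν, p.1 = p.2 := by
      filter_upwards [hae0, hprodae] with p h0 hp
      by_contra hne
      have hlt := hmid p.1 p.2 hp.1 hp.2 hne
      have hge : 2⁻¹ * ee c p.1 p.1 + 2⁻¹ * ee c p.2 p.2 ≤ ee c p.1 p.2 :=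
        tsub_eq_zero_iff_le.mp h0
      exact absurd hge (not_le.mpr hlt)
    have hae2 := Measure.ae_ae_of_ae_prod hdiag
    haveI : (ae ν).NeBot := ae_neBot.mpr (IsProbabilityMeasure.ne_zero ν)
    obtain ⟨Q₀, hQ₀⟩ := hae2.exists
    refine hνnotdirac Q₀ ?_
    ext s hs
    rw [Measure.dirac_apply' _ hs]
    by_cases hmem : Q₀ ∈ s
    · have hin : ∀ᵐ Q' ∂ν, Q' ∈ s := hQ₀.mono fun Q' hq => (show Q₀ = Q' from hq) ▸ hmem
      have hc0 : ν sᶜ = 0 := ae_iff.mp hin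
      rw [Set.indicator_of_mem hmem]
      simpa using (prob_compl_eq_zero_iff hs).mp hc0
    · have hout : ∀ᵐ Q' ∂ν, Q' ∉ s := hQ₀.mono fun Q' hq => (show Q₀ = Q' from hq) ▸ hmem
      rw [Set.indicator_of_notMem hmem]
      exact measure_eq_zero_iff_ae_notMem.mpr hout
  have hfinal : ∫⁻ p : Measure X × Measure X, ee c p.1 p.2 ∂(ν.prod ν)
      < ∫⁻ Q, ee c Q Q ∂ν := lt_of_le_of_ne hLle hLne
  rw [hL1, hL2, hR1, ← hh_int]
  exact (ENNReal.toReal_lt_toReal hL_ne hI_ne).mpr hfinal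
end
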